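/- arXiv:1602.00518 — 4 statements merged into one kernel-verified Lean document; each statement's English description precedes it below -/
import Mathlib

section
/- For odd n ≥ 3, arccos(1/√n) is not a rational multiple of π. -/
open Real

private def pinA (n : ℕ) : ℕ → ℤ
  | 0 => 1
  | 1 => 1
  | (k+2) => 2 * pinA n (k+1) - (n : ℤ) * pinA n k

private lemma pinA_mod (n : ℕ) : ∀ k : ℕ, ((pinA n (k+1) : ZMod n) = 2 ^ k)
  | 0 => by simp [pinA]
  | (k+1) => by
    have ih := pinA_mod n k
    show ((2 * pinA n (k+1) - (n : ℤ) * pinA n k : ℤ) : ZMod n) = 2 ^ (k+1)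
    push_cast
    simp [ih, pow_succ]
    ring

private lemma pinA_real (n : ℕ) (hn : 3 ≤ n) : ∀ k : ℕ,
    (pinA n k : ℝ) = (Real.sqrt n) ^ k *
      Real.cos (k * Real.arccos (1 / Real.sqrt n)) := by
  have hn1 : (1 : ℝ) ≤ (n : ℝ) := by exact_mod_cast (by omega : 1 ≤ n)
  have hs1 : (1 : ℝ) ≤ Real.sqrt n := by
    rw [show (1:ℝ) = Real.sqrt 1 by simp]
    exact Real.sqrt_le_sqrt hn1
  have hs0 : (0 : ℝ) < Real.sqrt n := lt_of_lt_of_le one_pos hs1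
  have hcos : Real.cos (Real.arccos (1 / Real.sqrt n)) = 1 / Real.sqrt n := by
    apply Real.cos_arccos
    · linarith [div_nonneg (zero_le_one) hs0.le]
    · rw [div_le_one hs0]; exact hs1
  set θ := Real.arccos (1 / Real.sqrt n)
  set s := Real.sqrt n
  have key : ∀ k : ℕ, (pinA n k : ℝ) = s ^ k * Real.cos (k * θ) ∧
      (pinA n (k+1) : ℝ) = s ^ (k+1) * Real.cos ((k+1) * θ) := by
    intro k
    induction k with
    | zero =>
      constructor
      · simp [pinA]
      · simp [pinA, hcos]
        field_simp
    | succ k ih =>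
      obtain ⟨ih1, ih2⟩ := ih
      constructor
      · exact_mod_cast ih2
      have hrec : Real.cos (((k:ℝ)+1+1) * θ) =
          2 * Real.cos θ * Real.cos (((k:ℝ)+1) * θ) - Real.cos ((k:ℝ) * θ) := by
        have e1 : ((k:ℝ)+1+1) * θ = ((k:ℝ)+1) * θ + θ := by ring
        have e2 : (k:ℝ) * θ = ((k:ℝ)+1) * θ - θ := by ring
        rw [e1, e2, Real.cos_add, Real.cos_sub]
        ring
      have hsq : s ^ 2 = (n : ℝ) := Real.sq_sqrt (by positivity)
      have hs0' : s ≠ 0 := ne_of_gt hs0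
      show ((2 * pinA n (k+1) - (n : ℤ) * pinA n k : ℤ) : ℝ) = _
      push_cast
      rw [ih1, ih2, hrec, hcos, ← hsq]
      field_simp
      ring
  intro k
  exact (key k).1

theorem arccos_one_div_sqrt_irrational (n : ℕ) (hn : 3 ≤ n) (hodd : Odd n) :
    ¬ ∃ q : ℚ, Real.arccos (1 / Real.sqrt n) = q * Real.pi := by
  rintro ⟨q, hq⟩
  set θ := Real.arccos (1 / Real.sqrt n)
  set d := q.den with hd
  have hd1 : 1 ≤ d := q.pos
  -- cos (2d θ) = 1
  have hdθ : ((2*d : ℕ) : ℝ) * θ = (q.num : ℝ) * (2 * Real.pi) := by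
    rw [hq]
    have : ((q : ℝ)) = (q.num : ℝ) / (q.den : ℝ) := by
      rw [Rat.cast_def]
    rw [this]
    have hden : ((q.den : ℝ)) ≠ 0 := by positivity
    field_simp
    push_cast [hd]
    ring
  have hcos1 : Real.cos (((2*d : ℕ) : ℝ) * θ) = 1 := by
    rw [hdθ]
    exact Real.cos_int_mul_two_pi q.num
  -- so pinA n (2d) = n ^ d
  have hreal := pinA_real n hn (2*d)
  rw [hcos1, mul_one] at hreal
  have hsq : (Real.sqrt n) ^ (2*d) = ((n:ℝ)) ^ d := by
    rw [pow_mul, Real.sq_sqrt (by positivity)]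
  rw [hsq] at hreal
  have hint : pinA n (2*d) = (n : ℤ) ^ d := by
    exact_mod_cast hreal
  -- mod n: pinA n (2d) = 2^(2d-1), but also ≡ 0
  have hmod := pinA_mod n (2*d - 1)
  rw [show 2*d - 1 + 1 = 2*d from by omega, hint] at hmod
  push_cast at hmod
  rw [ZMod.natCast_self, zero_pow (by omega : d ≠ 0)] at hmod
  -- hence n ∣ 2^(2d-1) in ℕ
  have hdvd : n ∣ 2 ^ (2*d - 1) := by
    have : ((2 ^ (2*d-1) : ℕ) : ZMod n) = 0 := by push_cast; exact hmod.symm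
    exact (ZMod.natCast_eq_zero_iff _ _).mp this
  have hcop : Nat.Coprime n 2 := hodd.coprime_two_right
  have hn1 : n = 1 := (hcop.pow_right _).eq_one_of_dvd hdvd
  omega
end

section
/- The angle 2·arctan(1/2) is not a rational multiple of π. -/
open Real Complex

lemma sqrt54 : Real.sqrt (5/4) = Real.sqrt 5 / 2 := by
  rw [show (5:ℝ)/4 = 5/2^2 by norm_num, Real.sqrt_div' 5 (by norm_num),
    Real.sqrt_sq (by norm_num : (0:ℝ) ≤ 2)]

lemma two_add_I : (2 + Complex.I) = Real.sqrt 5 * Complex.exp (Real.arctan (1/2) * Complex.I) := by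
  have h5 : Real.sqrt 5 ≠ 0 := by positivity
  have hc : Real.cos (Real.arctan (1/2)) = 2 / Real.sqrt 5 := by
    rw [Real.cos_arctan, show (1:ℝ) + (1/2)^2 = 5/4 by norm_num, sqrt54]
    field_simp
  have hs : Real.sin (Real.arctan (1/2)) = 1 / Real.sqrt 5 := by
    rw [Real.sin_arctan, show (1:ℝ) + (1/2)^2 = 5/4 by norm_num, sqrt54]
    field_simp
  rw [Complex.exp_mul_I, ← Complex.ofReal_cos, ← Complex.ofReal_sin, hc, hs]
  have : Real.sqrt 5 * Real.sqrt 5 = 5 := Real.mul_self_sqrt (by norm_num)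
  push_cast
  have h5' : (Real.sqrt 5 : ℂ) ≠ 0 := by exact_mod_cast h5
  field_simp

theorem pinwheel_angle_irrational :
    ¬ ∃ q : ℚ, 2 * Real.arctan (1 / 2) = q * Real.pi := by
  rintro ⟨q, hq⟩
  have hd : (0:ℝ) < q.den := by positivity
  have hreal : (2 * q.den : ℝ) * Real.arctan (1/2) = q.num * Real.pi := by
    have hden : ((q.den : ℝ)) * (q : ℝ) = q.num := by
      rw [mul_comm]
      exact_mod_cast Rat.mul_den_eq_num q
    calc (2 * q.den : ℝ) * Real.arctan (1/2) = q.den * (2 * Real.arctan (1/2)) := by ring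
    _ = q.den * ((q:ℝ) * Real.pi) := by rw [hq]
    _ = q.num * Real.pi := by rw [← hden]; ring
  have key : (2 + Complex.I)^(2*q.den) = (-1:ℂ)^q.num * 5^q.den := by
    rw [two_add_I, mul_pow, ← Complex.exp_nat_mul]
    have h1 : ((Real.sqrt 5 : ℝ) : ℂ)^(2*q.den) = 5^q.den := by
      rw [pow_mul]
      norm_cast
      rw [Real.sq_sqrt (by norm_num : (0:ℝ) ≤ 5)]
      push_cast
      ring
    have h2 : ((2*q.den : ℕ) : ℂ) * (Real.arctan (1/2) * Complex.I)
        = q.num * (Real.pi * Complex.I) := by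
      have := congrArg ((↑·) : ℝ → ℂ) hreal
      push_cast at this ⊢
      rw [← mul_assoc, ← mul_assoc, this]
    rw [h1, h2, Complex.exp_int_mul, Complex.exp_pi_mul_I, mul_comm]
  have key2 : (2 + Complex.I)^(4*q.den) = 25^q.den := by
    have : (2 + Complex.I)^(4*q.den) = ((2 + Complex.I)^(2*q.den))^2 := by
      rw [← pow_mul]; ring_nf
    rw [this, key, mul_pow, ← zpow_natCast ((-1:ℂ)^q.num) 2, ← zpow_mul]
    rw [show q.num * (2:ℕ) = 2 * q.num by push_cast; ring, zpow_mul]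
    norm_num
    rw [← pow_mul]
    rw [show (5:ℂ)^(q.den*2) = ((5:ℂ)^2)^q.den by rw [← pow_mul, mul_comm]]
    norm_num
  have gkey : ((⟨2,1⟩ : GaussianInt))^(4*q.den) = 25^q.den := by
    apply GaussianInt.toComplex_injective
    rw [map_pow, map_pow, GaussianInt.toComplex_def', map_ofNat]
    push_cast
    rw [show (2:ℂ) + 1 * Complex.I = 2 + Complex.I by ring, key2]
  have := congrArg (Zsqrtd.lift (⟨(2 : ZMod 5), by decide⟩ : {r : ZMod 5 // r * r = ((-1 : ℤ) : ZMod 5)})) gkey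
  rw [map_pow, map_pow, Zsqrtd.lift_apply_apply, map_ofNat] at this
  rw [show ((⟨2,1⟩:GaussianInt).re : ZMod 5) + ((⟨2,1⟩:GaussianInt).im : ZMod 5) * 2 = 4 by decide] at this
  rw [pow_mul, show (4:ZMod 5)^4 = 1 from by decide, one_pow,
    show (25:ZMod 5) = 0 from by decide, zero_pow (Nat.pos_of_ne_zero (fun h => absurd h q.den_nz)).ne'] at this
  exact absurd this (by decide)
end

section
/- Let M be the 6×6 matrix with rows (1,0,0,0,2,4), (8,5,0,0,0,0), (32,4,0,0,25,24), (16,0,0,0,12,17), (0,0,1,0,0,0), (0,0,0,1,0,0). Then 5 + 2√2 is an eigenvalue of M. -/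
private lemma cons_val_five {α : Type*} (a : α) (u : Fin 5 → α) :
    Matrix.vecCons a u 5 = u 4 := rfl

theorem sigma8_matrix_eigenvalue :
    ∃ v : Fin 6 → ℝ, v ≠ 0 ∧
      (!![1, 0, 0, 0, 2, 4; 8, 5, 0, 0, 0, 0; 32, 4, 0, 0, 25, 24;
          16, 0, 0, 0, 12, 17; 0, 0, 1, 0, 0, 0; 0, 0, 0, 1, 0, 0] :
        Matrix (Fin 6) (Fin 6) ℝ).mulVec v = (5 + 2 * Real.sqrt 2) • v := by
  have hs : Real.sqrt 2 * Real.sqrt 2 = 2 := Real.mul_self_sqrt (by norm_num)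
  set s := Real.sqrt 2 with hs_def
  refine ⟨![1, 2*s, (16+37*s)/5, (27+4*s)/5, (9*s-4)/5, (7-2*s)/5], ?_, ?_⟩
  · intro h
    have := congrFun h 0
    simp at this
  · funext i
    fin_cases i <;>
      simp [Matrix.mulVec, dotProduct, Fin.sum_univ_six, cons_val_five] <;>
      nlinarith [hs]
end

section
/- Let n ≥ 3, let a, b be distinct positive rationals, and let z = a·e^{iπ/n} + b. Then arg(z) is not a rational multiple of π. -/
open Complex Real IntermediateField

lemma totient_lt_of_even_of_two_le {k t : ℕ} (hk : 0 < k) (h2 : 2 ∣ k) (ht : 2 ≤ t) :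
    k.totient < (k * t).totient := by
  obtain ⟨p, hp, s, rfl⟩ : ∃ p, p.Prime ∧ ∃ s, t = p * s := by
    obtain ⟨p, hp, hpd⟩ := Nat.exists_prime_and_dvd (by omega : t ≠ 1)
    exact ⟨p, hp, hpd⟩
  have hs : 0 < s := Nat.pos_of_ne_zero (by rintro rfl; simp at ht)
  have hks : 0 < k * s := Nat.mul_pos hk hs
  have hle : k.totient ≤ (k * s).totient :=
    Nat.le_of_dvd (Nat.totient_pos.mpr hks) (Nat.totient_dvd_of_dvd ⟨s, rfl⟩)
  have hrw : k * (p * s) = p * (k * s) := by ring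
  rw [hrw]
  by_cases hpd : p ∣ k * s
  · rw [Nat.totient_mul_of_prime_of_dvd hp hpd]
    have h2p : 2 ≤ p := hp.two_le
    calc k.totient < 2 * (k*s).totient := by
          have := Nat.totient_pos.mpr hks; omega
      _ ≤ p * (k*s).totient := Nat.mul_le_mul_right _ h2p
  · rw [Nat.totient_mul_of_prime_of_not_dvd hp hpd]
    have hp2 : p ≠ 2 := by
      rintro rfl; exact hpd (dvd_trans h2 ⟨s, rfl⟩)
    have hp3 : 3 ≤ p := by
      rcases hp.two_le.lt_or_eq with h | h; omega; omega
    calc k.totient < 2 * (k*s).totient := by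
          have := Nat.totient_pos.mpr hks; omega
      _ ≤ (p-1) * (k*s).totient := Nat.mul_le_mul_right _ (by omega)

set_option maxHeartbeats 1600000 in
theorem arg_irrational_general (n : ℕ) (hn : 3 ≤ n) (a b : ℚ)
    (ha : 0 < a) (hb : 0 < b) (hab : a ≠ b) :
    ¬ ∃ q : ℚ, Complex.arg ((a : ℂ) * Complex.exp (Real.pi * Complex.I / n) + (b : ℂ))
      = q * Real.pi := by
  rintro ⟨q, hq⟩
  have hn0 : (0:ℝ) < n := by positivity
  set θ : ℝ := π / n with hθ
  have hθpos : 0 < θ := by positivity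
  have hθlt : θ < π / 2 := by
    rw [hθ, div_lt_div_iff₀ hn0 two_pos]
    have : (2:ℝ) < n := by exact_mod_cast (by omega : 2 < n)
    nlinarith [Real.pi_pos]
  set ζ : ℂ := Complex.exp (Real.pi * Complex.I / n) with hζdef
  have hζ : ζ = Complex.exp ((θ:ℂ) * Complex.I) := by
    rw [hζdef]; congr 1; push_cast [hθ]; ring_nf
  set z : ℂ := (a : ℂ) * ζ + (b : ℂ) with hzdef
  have hre : z.re = (a:ℝ) * Real.cos θ + (b:ℝ) := by
    simp [hzdef, hζ, Complex.add_re, Complex.mul_re, Complex.exp_ofReal_mul_I_re,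
      Complex.exp_ofReal_mul_I_im]
  have him : z.im = (a:ℝ) * Real.sin θ := by
    simp [hzdef, hζ, Complex.add_im, Complex.mul_im, Complex.exp_ofReal_mul_I_re,
      Complex.exp_ofReal_mul_I_im]
  have hcos : 0 < Real.cos θ := Real.cos_pos_of_mem_Ioo ⟨by linarith, hθlt⟩
  have hsin : 0 < Real.sin θ := Real.sin_pos_of_pos_of_lt_pi hθpos (by linarith [Real.pi_pos])
  have ha' : (0:ℝ) < a := by exact_mod_cast ha
  have hb' : (0:ℝ) < b := by exact_mod_cast hb
  have hrepos : 0 < z.re := by rw [hre]; positivity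
  have himpos : 0 < z.im := by rw [him]; positivity
  have hargarctan : Complex.arg z = Real.arctan (z.im / z.re) := by
    have h1 : |Complex.arg z| < π / 2 :=
      Complex.abs_arg_lt_pi_div_two_iff.mpr (Or.inl hrepos)
    rw [abs_lt] at h1
    rw [← Complex.tan_arg z, Real.arctan_tan h1.1 h1.2]
  have hargpos : 0 < Complex.arg z := by
    rw [hargarctan]
    have : 0 < z.im / z.re := div_pos himpos hrepos
    calc (0:ℝ) = Real.arctan 0 := by rw [Real.arctan_zero]
      _ < _ := Real.arctan_strictMono this
  have harglt : Complex.arg z < θ := by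
    rw [hargarctan]
    have htan : Real.arctan (Real.tan θ) = θ := Real.arctan_tan (by linarith) hθlt
    rw [← htan]
    apply Real.arctan_strictMono
    rw [Real.tan_eq_sin_div_cos, hre, him, div_lt_div_iff₀ (by positivity) hcos]
    nlinarith
  have hπ := Real.pi_pos
  have hq0 : 0 < q := by
    have h1 : (0:ℝ) < q * π := by rw [← hq]; exact hargpos
    have : (0:ℝ) < (q:ℝ) := by nlinarith [mul_lt_mul_of_pos_left h1 hn0, mul_inv_cancel₀ hn0.ne']
    exact_mod_cast this
  have hqn : (n:ℚ) * q < 1 := by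
    have h1 : (q:ℝ) * π < π / n := by rw [← hq]; exact harglt
    have : (n:ℝ) * q < 1 := by
      rw [div_eq_mul_inv] at h1
      have hn' : (0:ℝ) < (n:ℝ)⁻¹ := by positivity
      nlinarith [mul_lt_mul_of_pos_left h1 hn0, mul_inv_cancel₀ hn0.ne']
    exact_mod_cast this
  -- z = |z| e^{iqπ}
  have hzabs : (‖z‖ : ℂ) * Complex.exp ((q * π : ℝ) * Complex.I) = z := by
    rw [← hq]; exact Complex.norm_mul_exp_arg_mul_I z
  set ω : ℂ := Complex.exp ((2 * q * π : ℝ) * Complex.I) with hωdef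
  have hconj : (starRingEnd ℂ) z = (‖z‖ : ℂ) * Complex.exp ((-(q * π) : ℝ) * Complex.I) := by
    conv_lhs => rw [← hzabs]
    rw [map_mul, Complex.conj_ofReal, ← Complex.exp_conj, map_mul, Complex.conj_ofReal,
      Complex.conj_I]
    congr 2
    push_cast
    ring
  have hωz : ω * (starRingEnd ℂ) z = z := by
    rw [hconj, hωdef]
    calc Complex.exp ((2 * q * π : ℝ) * Complex.I) *
          ((‖z‖ : ℂ) * Complex.exp ((-(q * π) : ℝ) * Complex.I))
        = (‖z‖ : ℂ) * (Complex.exp ((2 * q * π : ℝ) * Complex.I) *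
            Complex.exp ((-(q * π) : ℝ) * Complex.I)) := by ring
      _ = (‖z‖ : ℂ) * Complex.exp (((2 * q * π : ℝ) : ℂ) * Complex.I
            + ((-(q * π) : ℝ) : ℂ) * Complex.I) := by rw [Complex.exp_add]
      _ = (‖z‖ : ℂ) * Complex.exp (((q * π : ℝ) : ℂ) * Complex.I) := by
            congr 1; push_cast; ring_nf
      _ = z := hzabs
  -- primitivity of ζ
  have hζprim : IsPrimitiveRoot ζ (2 * n) := by
    have h := Complex.isPrimitiveRoot_exp (2 * n) (by omega)
    convert h using 2
    have hnc : (n:ℂ) ≠ 0 := by exact_mod_cast hn0.ne'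
    push_cast
    field_simp
  -- primitivity of ω
  set p : ℕ := q.num.toNat with hpdef
  set m : ℕ := q.den with hmdef
  have hm0 : m ≠ 0 := q.den_nz
  have hqnum : 0 < q.num := Rat.num_pos.mpr hq0
  have hpnum : (p : ℤ) = q.num := Int.toNat_of_nonneg (le_of_lt hqnum)
  have hp0 : 0 < p := by omega
  have hcop : p.Coprime m := by
    have h := q.reduced
    have : q.num.natAbs = p := by omega
    rwa [this] at h
  have hqpm : ((q:ℚ):ℂ) = (p:ℂ) / (m:ℂ) := by
    rw [Rat.cast_def]
    congr 1
    exact_mod_cast hpnum.symm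
  have hωprim : IsPrimitiveRoot ω m := by
    have h := Complex.isPrimitiveRoot_exp_of_coprime p m hm0 hcop
    convert h using 2
    push_cast
    rw [hqpm]
    ring
  -- Bezout
  set g : ℕ := Nat.gcd m (2 * n * p) with hgdef
  set L : ℕ := Nat.lcm (2 * n) m with hLdef
  have hgg : Nat.gcd m (2 * n) = g := by
    rw [hgdef]
    exact (Nat.Coprime.gcd_mul_right_cancel_right (2 * n) hcop).symm
  have hg0 : g ≠ 0 := by
    rw [← hgg]
    simp [Nat.gcd_eq_zero_iff, hm0]
  have hL0 : L ≠ 0 := Nat.lcm_ne_zero (by omega) hm0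
  have hLg : g * L = 2 * n * m := by
    rw [← hgg, hLdef, Nat.gcd_comm m (2*n)]
    exact Nat.gcd_mul_lcm (2*n) m
  set A : ℤ := Nat.gcdA m (2 * n * p) with hAdef
  set B : ℤ := Nat.gcdB m (2 * n * p) with hBdef
  have hbez : (g : ℤ) = m * A + (2 * n * p) * B := Nat.gcd_eq_gcd_ab m (2 * n * p)
  set η : ℂ := ζ ^ A * ω ^ B with hηdef
  have hζA : ζ ^ A = Complex.exp ((A : ℂ) * (↑π * Complex.I / ↑n)) :=
    (Complex.exp_int_mul _ A).symm
  have hωB : ω ^ B = Complex.exp ((B : ℂ) * (((2 * (q:ℝ) * π : ℝ) : ℂ) * Complex.I)) :=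
    (Complex.exp_int_mul _ B).symm
  have hnc : (n:ℂ) ≠ 0 := by exact_mod_cast hn0.ne'
  have hmc : (m:ℂ) ≠ 0 := by exact_mod_cast hm0
  have hLc : (L:ℂ) ≠ 0 := by exact_mod_cast hL0
  have hbezC : (m:ℂ) * A + 2 * n * p * B = g := by exact_mod_cast hbez.symm
  have hLgC : (g:ℂ) * L = 2 * n * m := by exact_mod_cast hLg
  have hη : η = Complex.exp (2 * ↑π * Complex.I / (L:ℂ)) := by
    rw [hηdef, hζA, hωB, ← Complex.exp_add]
    congr 1
    push_cast
    rw [hqpm]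
    field_simp
    ring_nf
    linear_combination (L:ℂ) * hbezC + hLgC
  have hηprim : IsPrimitiveRoot η L := by
    rw [hη]
    exact Complex.isPrimitiveRoot_exp L hL0
  -- field theory: η lives in ℚ(ζ), so φ(L) ≤ φ(2n)
  have hζint : IsIntegral ℚ ζ := (hζprim.isIntegral (by omega)).tower_top
  haveI hKfd : FiniteDimensional ℚ ℚ⟮ζ⟯ := IntermediateField.adjoin.finiteDimensional hζint
  have hcyc : Polynomial.cyclotomic (2*n) ℚ = minpoly ℚ ζ :=
    Polynomial.cyclotomic_eq_minpoly_rat hζprim (by omega)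
  have hfinrank : Module.finrank ℚ ℚ⟮ζ⟯ = Nat.totient (2*n) := by
    rw [IntermediateField.adjoin.finrank hζint, ← hcyc, Polynomial.natDegree_cyclotomic]
  have hζmem : ζ ∈ ℚ⟮ζ⟯ := IntermediateField.mem_adjoin_simple_self ℚ ζ
  have hζabs : ‖ζ‖ = 1 := by rw [hζ]; exact Complex.norm_exp_ofReal_mul_I θ
  have hζconj : (starRingEnd ℂ) ζ = ζ⁻¹ := (Complex.inv_eq_conj (by rw [hζabs])).symm
  have hamem : ((a:ℚ):ℂ) ∈ ℚ⟮ζ⟯ := SubfieldClass.ratCast_mem _ a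
  have hbmem : ((b:ℚ):ℂ) ∈ ℚ⟮ζ⟯ := SubfieldClass.ratCast_mem _ b
  have hzmem : z ∈ ℚ⟮ζ⟯ := by
    rw [hzdef]
    exact add_mem (mul_mem hamem hζmem) hbmem
  have hconjz : (starRingEnd ℂ) z = (a:ℂ) * ζ⁻¹ + (b:ℂ) := by
    rw [hzdef, map_add, map_mul, hζconj, map_ratCast, map_ratCast]
  have hconjzmem : (starRingEnd ℂ) z ∈ ℚ⟮ζ⟯ := by
    rw [hconjz]
    exact add_mem (mul_mem hamem (inv_mem hζmem)) hbmem
  have hzne : z ≠ 0 := by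
    intro h0
    rw [h0] at hrepos
    simp at hrepos
  have hconjzne : (starRingEnd ℂ) z ≠ 0 := by
    simpa using hzne
  have hωmem : ω ∈ ℚ⟮ζ⟯ := by
    have hω : ω = z / (starRingEnd ℂ) z := by
      rw [eq_div_iff hconjzne, hωz]
    rw [hω]
    exact div_mem hzmem hconjzmem
  have hηmem : η ∈ ℚ⟮ζ⟯ := by
    rw [hηdef]
    exact mul_mem (zpow_mem hζmem A) (zpow_mem hωmem B)
  have hdeg : Nat.totient L ≤ Nat.totient (2*n) := by
    have h1 : Polynomial.cyclotomic L ℚ = minpoly ℚ η :=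
      Polynomial.cyclotomic_eq_minpoly_rat hηprim (Nat.pos_of_ne_zero hL0)
    have h2 : minpoly ℚ ((algebraMap ℚ⟮ζ⟯ ℂ) (⟨η, hηmem⟩ : ℚ⟮ζ⟯)) = minpoly ℚ (⟨η, hηmem⟩ : ℚ⟮ζ⟯) :=
      minpoly.algebraMap_eq (algebraMap ℚ⟮ζ⟯ ℂ).injective _
    have h3 : (algebraMap ℚ⟮ζ⟯ ℂ) (⟨η, hηmem⟩ : ℚ⟮ζ⟯) = η := rfl
    have h4 := minpoly.natDegree_le (A := ℚ) (⟨η, hηmem⟩ : ℚ⟮ζ⟯)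
    rw [← h2, h3, ← h1, Polynomial.natDegree_cyclotomic, hfinrank] at h4
    exact h4
  -- conclude L = 2n hence m ∣ 2n
  have h2nL : 2*n ∣ L := Nat.dvd_lcm_left _ _
  obtain ⟨t, hLt⟩ := h2nL
  have ht1 : t = 1 := by
    rcases Nat.lt_or_ge t 2 with h | h
    · interval_cases t
      · exfalso; apply hL0; rw [hLt]; ring
      · rfl
    · exfalso
      have := totient_lt_of_even_of_two_le (k := 2*n) (by omega) ⟨n, rfl⟩ h
      rw [← hLt] at this
      omega
  have hL2n : L = 2*n := by rw [hLt, ht1, mul_one]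
  have hm2n : m ∣ 2*n := by rw [← hL2n]; exact Nat.dvd_lcm_right _ _
  -- numerics: q = 1/(2n)
  have hq_eq : q = (p:ℚ)/(m:ℚ) := by
    rw [← Rat.num_div_den q]
    congr 1
    exact_mod_cast hpnum.symm
  have hm' : (0:ℚ) < (m:ℚ) := by exact_mod_cast Nat.pos_of_ne_zero hm0
  have hnpm : n * p < m := by
    have h1 : (n:ℚ) * ((p:ℚ)/(m:ℚ)) < 1 := by rw [← hq_eq]; exact hqn
    rw [mul_div_assoc'] at h1
    rw [div_lt_one hm'] at h1
    exact_mod_cast h1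
  have hmle : m ≤ 2*n := Nat.le_of_dvd (by omega) hm2n
  have hm2n' : m = 2*n := by
    obtain ⟨c, hc⟩ := hm2n
    have hnp' : n * 1 ≤ n * p := Nat.mul_le_mul_left n hp0
    rcases Nat.lt_or_ge c 2 with h | h
    · rcases (by omega : c = 0 ∨ c = 1) with rfl | rfl <;> omega
    · have h2 : m * 2 ≤ m * c := Nat.mul_le_mul_left m h
      omega
  have hp1 : p = 1 := by
    by_contra hpc
    have h2 : 2 ≤ p := by omega
    have := Nat.mul_le_mul_left n h2
    omega
  -- so ω = ζ
  have hq2n : ((q:ℚ):ℂ) = 1 / (2*(n:ℂ)) := by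
    rw [hqpm, hp1, hm2n']
    push_cast
    ring
  have hωζ : ω = ζ := by
    rw [hωdef, hζdef]
    congr 1
    have : ((q:ℚ):ℂ) * (2*(n:ℂ)) = 1 := by rw [hq2n]; field_simp
    push_cast
    field_simp
    linear_combination this
  -- final contradiction
  have key : ζ * ((a:ℂ) * ζ⁻¹ + (b:ℂ)) = (a:ℂ) * ζ + (b:ℂ) := by
    rw [hωζ, hconjz] at hωz
    rw [hωz]
  have hζne : ζ ≠ 0 := Complex.exp_ne_zero _
  have key2 : ((a:ℂ) - (b:ℂ)) * (1 - ζ) = 0 := by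
    field_simp at key
    linear_combination key
  have habC : ((a:ℚ):ℂ) ≠ ((b:ℚ):ℂ) := by
    intro h
    exact hab (by exact_mod_cast h)
  have hζ1 : ζ = 1 := by
    rcases mul_eq_zero.mp key2 with h | h
    · exact absurd (sub_eq_zero.mp h) habC
    · have := sub_eq_zero.mp h
      exact this.symm
  have : ζ.im = 0 := by rw [hζ1]; simp
  rw [hζ, Complex.exp_ofReal_mul_I_im] at this
  linarith
end
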